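/- If G is a finite connected simple graph, then γ_cer(G) ≤ γ(G) + |S1(G)|, where S1(G) is the set of weak supports of G. -/

import Mathlib

open Finset

variable {V : Type*} [Fintype V] [DecidableEq V]

/-- `D` is a dominating set of `G`: every vertex outside `D` has a neighbour in `D`. -/
def IsDomSet (G : SimpleGraph V) (D : Finset V) : Prop :=
  ∀ v ∉ D, ∃ u ∈ D, G.Adj u v

/-- `D` is a certified dominating set of `G`: it is dominating and every vertex of `D`
has either zero or at least two neighbours outside `D`. -/
def IsCertDomSet (G : SimpleGraph V) [DecidableRel G.Adj] (D : Finset V) : Prop :=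
  IsDomSet G D ∧ ∀ v ∈ D, (G.neighborFinset v \ D).card = 0 ∨ 2 ≤ (G.neighborFinset v \ D).card

/-- The domination number: minimum cardinality of a dominating set. -/
noncomputable def gamma (G : SimpleGraph V) : ℕ :=
  sInf {n | ∃ D : Finset V, IsDomSet G D ∧ D.card = n}

/-- The certified domination number: minimum cardinality of a certified dominating set. -/
noncomputable def gammaCer (G : SimpleGraph V) [DecidableRel G.Adj] : ℕ :=
  sInf {n | ∃ D : Finset V, IsCertDomSet G D ∧ D.card = n}

/-- A leaf is a vertex of degree one. -/
abbrev IsLeaf (G : SimpleGraph V) [DecidableRel G.Adj] (v : V) : Prop := G.degree v = 1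

/-- The set of leaf-neighbours of a vertex. -/
abbrev leafNbrs (G : SimpleGraph V) [DecidableRel G.Adj] (v : V) : Finset V :=
  (G.neighborFinset v).filter (fun l => G.degree l = 1)

/-- A weak support is a vertex adjacent to exactly one leaf. -/
abbrev IsWeakSupport (G : SimpleGraph V) [DecidableRel G.Adj] (v : V) : Prop :=
  (leafNbrs G v).card = 1

/-- A strong support is a vertex adjacent to at least two leaves. -/
abbrev IsStrongSupport (G : SimpleGraph V) [DecidableRel G.Adj] (v : V) : Prop :=
  2 ≤ (leafNbrs G v).card

section AuxCertDom
set_option linter.unusedSectionVars false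
variable (G : SimpleGraph V) [DecidableRel G.Adj]

def badSet (D : Finset V) : Finset V :=
  D.filter (fun v => (G.neighborFinset v \ D).card = 1 ∧
    ((G.neighborFinset v \ D).filter (fun u => G.degree u ≠ 1)).Nonempty)

lemma univ_dom : IsDomSet G univ := fun v hv => absurd (mem_univ v) hv

lemma univ_cert : IsCertDomSet G univ := by
  refine ⟨univ_dom G, fun v _ => Or.inl ?_⟩
  simp

lemma gamma_le_card {D : Finset V} (h : IsDomSet G D) : gamma G ≤ D.card :=
  Nat.sInf_le ⟨D, h, rfl⟩

lemma gammaCer_le_card {D : Finset V} (h : IsCertDomSet G D) : gammaCer G ≤ D.card :=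
  Nat.sInf_le ⟨D, h, rfl⟩

lemma exists_gamma_set : ∃ D : Finset V, IsDomSet G D ∧ D.card = gamma G := by
  have hne : {n | ∃ D : Finset V, IsDomSet G D ∧ D.card = n}.Nonempty :=
    ⟨(univ : Finset V).card, univ, univ_dom G, rfl⟩
  obtain ⟨D, hD, hc⟩ := Nat.sInf_mem hne
  exact ⟨D, hD, hc⟩

lemma one_le_gamma [Nonempty V] : 1 ≤ gamma G := by
  obtain ⟨D, hD, hc⟩ := exists_gamma_set G
  rcases Nat.eq_zero_or_pos (gamma G) with h0 | h1
  · exfalso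
    rw [h0, card_eq_zero] at hc
    obtain ⟨v⟩ := ‹Nonempty V›
    obtain ⟨u, hu, -⟩ := hD v (by simp [hc])
    simp [hc] at hu
  · exact h1

lemma erase_dom_absurd {D : Finset V} {w : V} (hc : D.card = gamma G) (hw : w ∈ D)
    (h : IsDomSet G (D.erase w)) : False := by
  have h1 := gamma_le_card G h
  rw [card_erase_of_mem hw, hc] at h1
  have h2 : 1 ≤ gamma G := hc ▸ card_pos.mpr ⟨w, hw⟩
  omega

lemma leafSwap (h3 : 3 ≤ Fintype.card V) (hconn : G.Connected) {D : Finset V} {l : V}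
    (hD : IsDomSet G D) (hc : D.card = gamma G) (hl : l ∈ D) (hdeg : G.degree l = 1) :
    ∃ D' : Finset V, IsDomSet G D' ∧ D'.card = gamma G ∧
      (D'.filter (fun x => G.degree x = 1)).card < (D.filter (fun x => G.degree x = 1)).card := by
  obtain ⟨s, hNs⟩ := card_eq_one.mp (by rwa [← SimpleGraph.card_neighborFinset_eq_degree] at hdeg)
  have hAdj : G.Adj l s := by
    rw [← SimpleGraph.mem_neighborFinset, hNs]; exact mem_singleton_self s
  have hsl : s ≠ l := hAdj.ne'
  have hNl : ∀ x, G.Adj l x → x = s := by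
    intro x hx
    have : x ∈ G.neighborFinset l := (SimpleGraph.mem_neighborFinset _ _ _).mpr hx
    rwa [hNs, mem_singleton] at this
  have hsD : s ∉ D := by
    intro hs
    apply erase_dom_absurd G hc hl
    intro x hx
    by_cases hxl : x = l
    · exact ⟨s, mem_erase.mpr ⟨hsl, hs⟩, hxl ▸ hAdj.symm⟩
    · have hxD : x ∉ D := fun h => hx (mem_erase.mpr ⟨hxl, h⟩)
      obtain ⟨d, hd, hadj⟩ := hD x hxD
      have hdl : d ≠ l := by
        rintro rfl
        exact hxD (hNl x hadj ▸ hs)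
      exact ⟨d, mem_erase.mpr ⟨hdl, hd⟩, hadj⟩
  have hsdeg : G.degree s ≠ 1 := by
    intro h1
    obtain ⟨t, hNt⟩ := card_eq_one.mp (by rwa [← SimpleGraph.card_neighborFinset_eq_degree] at h1)
    have hlt : l ∈ G.neighborFinset s := (SimpleGraph.mem_neighborFinset _ _ _).mpr hAdj.symm
    rw [hNt, mem_singleton] at hlt
    subst hlt
    have hNsl : ∀ x, G.Adj s x → x = l := by
      intro x hx
      have : x ∈ G.neighborFinset s := (SimpleGraph.mem_neighborFinset _ _ _).mpr hx
      rwa [hNt, mem_singleton] at this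
    have key : ∀ (a b : V), G.Walk a b → (a = l ∨ a = s) → (b = l ∨ b = s) := by
      intro a b w
      induction w with
      | nil => exact id
      | cons h p ih =>
        rename_i a' c' b' 
        intro ha
        apply ih
        rcases ha with rfl | rfl
        · exact Or.inr (hNl _ h)
        · exact Or.inl (hNsl _ h)
    have hsub : (univ : Finset V) ⊆ {l, s} := by
      intro x _
      obtain ⟨w⟩ := hconn.preconnected l x
      rcases key l x w (Or.inl rfl) with rfl | rfl <;> simp
    have := card_le_card hsub
    have h2 : ({l, s} : Finset V).card ≤ 2 := card_insert_le _ _ |>.trans (by simp)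
    rw [Finset.card_univ] at this
    omega
  refine ⟨insert s (D.erase l), ?_, ?_, ?_⟩
  · intro x hx
    by_cases hxl : x = l
    · subst hxl; exact ⟨s, mem_insert_self s _, hAdj.symm⟩
    · have hxs : x ≠ s := fun h => hx (by subst h; exact mem_insert_self x _)
      have hxD : x ∉ D := fun h => hx (mem_insert_of_mem (mem_erase.mpr ⟨hxl, h⟩))
      obtain ⟨d, hd, hadj⟩ := hD x hxD
      have hdl : d ≠ l := by
        rintro rfl
        exact hxs (hNl x hadj)
      exact ⟨d, mem_insert_of_mem (mem_erase.mpr ⟨hdl, hd⟩), hadj⟩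
  · rw [card_insert_of_notMem (fun h => hsD (mem_of_mem_erase h)),
      card_erase_of_mem hl, hc]
    have : 1 ≤ gamma G := hc ▸ card_pos.mpr ⟨l, hl⟩
    omega
  · have hsub : (insert s (D.erase l)).filter (fun x => G.degree x = 1) ⊆
        (D.filter (fun x => G.degree x = 1)).erase l := by
      intro x hx
      rw [mem_filter] at hx
      obtain ⟨hx1, hx2⟩ := hx
      have hxs : x ≠ s := fun h => hsdeg (h ▸ hx2)
      rcases mem_insert.mp hx1 with rfl | hx3
      · exact absurd rfl hxs
      · rw [mem_erase] at hx3
        exact mem_erase.mpr ⟨hx3.1, mem_filter.mpr ⟨hx3.2, hx2⟩⟩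
    calc ((insert s (D.erase l)).filter (fun x => G.degree x = 1)).card
        ≤ ((D.filter (fun x => G.degree x = 1)).erase l).card := card_le_card hsub
      _ < (D.filter (fun x => G.degree x = 1)).card := by
          rw [card_erase_of_mem (mem_filter.mpr ⟨hl, hdeg⟩)]
          have : 0 < (D.filter (fun x => G.degree x = 1)).card :=
            card_pos.mpr ⟨l, mem_filter.mpr ⟨hl, hdeg⟩⟩
          omega

lemma badSwap {D : Finset V} {v : V} (hD : IsDomSet G D) (hc : D.card = gamma G)
    (hnl : ∀ x ∈ D, G.degree x ≠ 1) (hv : v ∈ badSet G D) :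
    ∃ D' : Finset V, IsDomSet G D' ∧ D'.card = gamma G ∧ (∀ x ∈ D', G.degree x ≠ 1) ∧
      (badSet G D').card < (badSet G D).card := by
  rw [badSet, mem_filter] at hv
  obtain ⟨hvD, hcard1, hfne⟩ := hv
  obtain ⟨u, hNu⟩ := card_eq_one.mp hcard1
  have hudeg : G.degree u ≠ 1 := by
    obtain ⟨y, hy⟩ := hfne
    rw [hNu] at hy
    rw [mem_filter, mem_singleton] at hy
    exact hy.1 ▸ hy.2
  have humem : u ∈ G.neighborFinset v \ D := by rw [hNu]; exact mem_singleton_self u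
  have huD : u ∉ D := (mem_sdiff.mp humem).2
  have hAdjvu : G.Adj v u := (SimpleGraph.mem_neighborFinset _ _ _).mp (mem_sdiff.mp humem).1
  have hvu : v ≠ u := hAdjvu.ne
  have hvdeg : G.degree v ≠ 1 := hnl v hvD
  -- v has a neighbour inside D
  have hw0 : ∃ w0, w0 ∈ G.neighborFinset v ∧ w0 ∈ D := by
    by_contra h
    push_neg at h
    have : G.neighborFinset v \ D = G.neighborFinset v := by
      apply sdiff_eq_self_of_disjoint
      rw [disjoint_left]
      exact fun a ha haD => h a ha haD
    rw [this] at hNu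
    apply hvdeg
    rw [← SimpleGraph.card_neighborFinset_eq_degree, hNu, card_singleton]
  obtain ⟨w0, hw0N, hw0D⟩ := hw0
  have hw0v : w0 ≠ v := (G.ne_of_adj ((SimpleGraph.mem_neighborFinset _ _ _).mp hw0N)).symm
  -- minimality: the only D-neighbour of u is v
  have f2 : ∀ d ∈ D, G.Adj d u → d = v := by
    intro d hd hadj
    by_contra hdv
    apply erase_dom_absurd G hc hvD
    intro x hx
    by_cases hxv : x = v
    · subst hxv
      exact ⟨w0, mem_erase.mpr ⟨hw0v, hw0D⟩, (SimpleGraph.mem_neighborFinset _ _ _).mp hw0N |>.symm⟩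
    · have hxD : x ∉ D := fun h => hx (mem_erase.mpr ⟨hxv, h⟩)
      obtain ⟨d', hd', hadj'⟩ := hD x hxD
      by_cases hd'v : d' = v
      · subst hd'v
        have : x ∈ G.neighborFinset d' \ D :=
          mem_sdiff.mpr ⟨(SimpleGraph.mem_neighborFinset _ _ _).mpr hadj', hxD⟩
        rw [hNu, mem_singleton] at this
        subst this
        exact ⟨d, mem_erase.mpr ⟨hdv, hd⟩, hadj⟩
      · exact ⟨d', mem_erase.mpr ⟨hd'v, hd'⟩, hadj'⟩
  set D' := insert u (D.erase v) with hD'def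
  have hmemD' : ∀ x, x ∈ D' ↔ x = u ∨ (x ∈ D ∧ x ≠ v) := by
    intro x
    simp [hD'def, mem_insert, mem_erase, and_comm]
  have hvD' : v ∉ D' := by
    rw [hmemD']
    rintro (rfl | ⟨-, h⟩)
    · exact hvu rfl
    · exact h rfl
  have hdom' : IsDomSet G D' := by
    intro x hx
    by_cases hxv : x = v
    · subst hxv
      exact ⟨u, (hmemD' u).mpr (Or.inl rfl), hAdjvu.symm⟩
    · have hxD : x ∉ D := fun h => hx ((hmemD' x).mpr (Or.inr ⟨h, hxv⟩))
      obtain ⟨d, hd, hadj⟩ := hD x hxD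
      by_cases hdv : d = v
      · subst hdv
        have : x ∈ G.neighborFinset d \ D :=
          mem_sdiff.mpr ⟨(SimpleGraph.mem_neighborFinset _ _ _).mpr hadj, hxD⟩
        rw [hNu, mem_singleton] at this
        exact absurd ((hmemD' x).mpr (Or.inl this)) hx
      · exact ⟨d, (hmemD' d).mpr (Or.inr ⟨hd, hdv⟩), hadj⟩
  have hcard' : D'.card = gamma G := by
    rw [hD'def, card_insert_of_notMem (fun h => huD (mem_of_mem_erase h)),
      card_erase_of_mem hvD, hc]
    have : 1 ≤ gamma G := hc ▸ card_pos.mpr ⟨v, hvD⟩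
    omega
  have hnl' : ∀ x ∈ D', G.degree x ≠ 1 := by
    intro x hx
    rcases (hmemD' x).mp hx with rfl | ⟨hx1, -⟩
    · exact hudeg
    · exact hnl x hx1
  refine ⟨D', hdom', hcard', hnl', ?_⟩
  have hsub : badSet G D' ⊆ (badSet G D).erase v := by
    intro w hw
    rw [badSet, mem_filter] at hw
    obtain ⟨hwD', hc1, hne'⟩ := hw
    rcases (hmemD' w).mp hwD' with rfl | ⟨hwD, hwv⟩
    · -- w = u : impossible, u has at least 2 external neighbours wrt D'
      exfalso
      have hvext : v ∈ G.neighborFinset w \ D' :=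
        mem_sdiff.mpr ⟨(SimpleGraph.mem_neighborFinset _ _ _).mpr hAdjvu.symm, hvD'⟩
      have hz : ∃ z ∈ G.neighborFinset w, z ∉ D := by
        by_contra h
        push_neg at h
        apply hudeg
        have hNsub : G.neighborFinset w ⊆ {v} := by
          intro z hz
          rw [mem_singleton]
          exact f2 z (h z hz) ((SimpleGraph.mem_neighborFinset _ _ _).mp hz).symm
        have hNeq : G.neighborFinset w = {v} := by
          apply Subset.antisymm hNsub
          intro z hz
          rw [mem_singleton] at hz
          subst hz
          exact (SimpleGraph.mem_neighborFinset _ _ _).mpr hAdjvu.symm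
        rw [← SimpleGraph.card_neighborFinset_eq_degree, hNeq, card_singleton]
      obtain ⟨z, hzN, hzD⟩ := hz
      have hzD' : z ∉ D' := by
        rw [hmemD']
        rintro (rfl | ⟨h1, -⟩)
        · exact (G.irrefl ((SimpleGraph.mem_neighborFinset _ _ _).mp hzN))
        · exact hzD h1
      have hzext : z ∈ G.neighborFinset w \ D' := mem_sdiff.mpr ⟨hzN, hzD'⟩
      have hzv : z ≠ v := fun h => hzD (h ▸ hvD)
      have : 2 ≤ (G.neighborFinset w \ D').card := by
        have : ({z, v} : Finset V) ⊆ G.neighborFinset w \ D' := by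
          intro a ha
          rcases mem_insert.mp ha with rfl | ha
          · exact hzext
          · rw [mem_singleton] at ha; subst ha; exact hvext
        calc 2 = ({z, v} : Finset V).card := by rw [card_insert_of_notMem (by simpa using hzv), card_singleton]
          _ ≤ _ := card_le_card this
      omega
    · -- w ∈ D, w ≠ v
      have hwu : ¬ G.Adj w u := fun h => hwv (f2 w hwD h)
      have huNw : u ∉ G.neighborFinset w := fun h => hwu ((SimpleGraph.mem_neighborFinset _ _ _).mp h)
      by_cases hwvAdj : G.Adj w v
      · -- then the unique external neighbour of w wrt D' is v, and N(w) ⊆ D: contradiction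
        exfalso
        have hvext : v ∈ G.neighborFinset w \ D' :=
          mem_sdiff.mpr ⟨(SimpleGraph.mem_neighborFinset _ _ _).mpr hwvAdj, hvD'⟩
        obtain ⟨a, ha⟩ := card_eq_one.mp hc1
        have ha : G.neighborFinset w \ D' = {v} := by
          have h2 := hvext
          rw [ha, mem_singleton] at h2
          rw [ha, h2]
        have hNwD : ∀ x ∈ G.neighborFinset w, x ∈ D := by
          intro x hxN
          by_contra hxD
          have hxD' : x ∉ D' := by
            rw [hmemD']
            rintro (rfl | ⟨h1, -⟩)
            · exact huNw hxN
            · exact hxD h1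
          have : x ∈ G.neighborFinset w \ D' := mem_sdiff.mpr ⟨hxN, hxD'⟩
          rw [ha, mem_singleton] at this
          subst this
          exact hxD hvD
        apply erase_dom_absurd G hc hwD
        intro x hx
        by_cases hxw : x = w
        · subst hxw
          exact ⟨v, mem_erase.mpr ⟨Ne.symm hwv, hvD⟩, hwvAdj.symm⟩
        · have hxD : x ∉ D := fun h => hx (mem_erase.mpr ⟨hxw, h⟩)
          obtain ⟨d, hd, hadj⟩ := hD x hxD
          have hdw : d ≠ w := by
            rintro rfl
            exact hxD (hNwD x ((SimpleGraph.mem_neighborFinset _ _ _).mpr hadj))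
          exact ⟨d, mem_erase.mpr ⟨hdw, hd⟩, hadj⟩
      · -- externals unchanged
        have hEq : G.neighborFinset w \ D' = G.neighborFinset w \ D := by
          ext x
          simp only [mem_sdiff, hmemD']
          constructor
          · rintro ⟨hxN, hxD'⟩
            refine ⟨hxN, fun hxD => hxD' (Or.inr ⟨hxD, ?_⟩)⟩
            rintro rfl
            exact hwvAdj ((SimpleGraph.mem_neighborFinset _ _ _).mp hxN)
          · rintro ⟨hxN, hxD⟩
            refine ⟨hxN, ?_⟩
            rintro (rfl | ⟨h1, -⟩)
            · exact huNw hxN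
            · exact hxD h1
        rw [mem_erase]
        refine ⟨hwv, ?_⟩
        rw [badSet, mem_filter]
        exact ⟨hwD, by rw [← hEq]; exact hc1, by rw [← hEq]; exact hne'⟩
  calc (badSet G D').card ≤ ((badSet G D).erase v).card := card_le_card hsub
    _ < (badSet G D).card := by
        have hvmem : v ∈ badSet G D := by
          rw [badSet, mem_filter]; exact ⟨hvD, hcard1, hfne⟩
        have hpos : 0 < (badSet G D).card := card_pos.mpr ⟨v, hvmem⟩
        rw [card_erase_of_mem hvmem]
        omega

lemma exists_nice (h3 : 3 ≤ Fintype.card V) (hconn : G.Connected) :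
    ∃ D : Finset V, IsDomSet G D ∧ D.card = gamma G ∧ (∀ x ∈ D, G.degree x ≠ 1) ∧
      badSet G D = ∅ := by
  -- Step 1: a gamma-set with no leaves
  obtain ⟨D0, hD0, hc0⟩ := exists_gamma_set G
  have hS1 : {n | ∃ D : Finset V, IsDomSet G D ∧ D.card = gamma G ∧
      (D.filter (fun x => G.degree x = 1)).card = n}.Nonempty := ⟨_, D0, hD0, hc0, rfl⟩
  obtain ⟨D1, hD1, hc1, hm1⟩ := Nat.sInf_mem hS1
  have hleaf1 : ∀ x ∈ D1, G.degree x ≠ 1 := by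
    by_contra hcon
    push_neg at hcon
    obtain ⟨l, hl, hldeg⟩ := hcon
    obtain ⟨D', h1, h2, h3'⟩ := leafSwap G h3 hconn hD1 hc1 hl hldeg
    have hle := Nat.sInf_le (s := {n | ∃ D : Finset V, IsDomSet G D ∧ D.card = gamma G ∧
      (D.filter (fun x => G.degree x = 1)).card = n}) ⟨D', h1, h2, rfl⟩
    omega
  -- Step 2: minimize badSet among leafless gamma-sets
  have hS2 : {n | ∃ D : Finset V, IsDomSet G D ∧ D.card = gamma G ∧
      (∀ x ∈ D, G.degree x ≠ 1) ∧ (badSet G D).card = n}.Nonempty :=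
    ⟨_, D1, hD1, hc1, hleaf1, rfl⟩
  obtain ⟨D2, hD2, hc2, hnl2, hm2⟩ := Nat.sInf_mem hS2
  refine ⟨D2, hD2, hc2, hnl2, ?_⟩
  rw [← card_eq_zero]
  by_contra hcon
  obtain ⟨v, hv⟩ := card_pos.mp (Nat.pos_of_ne_zero hcon)
  obtain ⟨D', h1, h2, h3', h4⟩ := badSwap G hD2 hc2 hnl2 hv
  have hle := Nat.sInf_le (s := {n | ∃ D : Finset V, IsDomSet G D ∧ D.card = gamma G ∧
    (∀ x ∈ D, G.degree x ≠ 1) ∧ (badSet G D).card = n}) ⟨D', h1, h2, h3', rfl⟩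
  omega

lemma main_ge3 (h3 : 3 ≤ Fintype.card V) (hconn : G.Connected) :
    gammaCer G ≤ gamma G + (univ.filter (fun s => IsWeakSupport G s)).card := by
  classical
  obtain ⟨D, hD, hc, hnl, hbad⟩ := exists_nice G h3 hconn
  set B := univ.filter (fun u => G.degree u = 1 ∧ ∃ v ∈ D, G.neighborFinset v \ D = {u})
    with hBdef
  have hBspec : ∀ u ∈ B, G.degree u = 1 ∧ ∃ v ∈ D, G.neighborFinset v \ D = {u} :=
    fun u hu => (mem_filter.mp hu).2
  have hBD : ∀ u ∈ B, u ∉ D := by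
    intro u hu
    obtain ⟨hdeg, v, hvD, hveq⟩ := hBspec u hu
    have : u ∈ G.neighborFinset v \ D := by rw [hveq]; exact mem_singleton_self u
    exact (mem_sdiff.mp this).2
  have hBnbr : ∀ u ∈ B, ∀ v ∈ D, G.neighborFinset v \ D = {u} → G.neighborFinset u = {v} := by
    intro u hu v hvD hveq
    have hdeg := (hBspec u hu).1
    obtain ⟨s, hNs⟩ := card_eq_one.mp
      (by rwa [← SimpleGraph.card_neighborFinset_eq_degree] at hdeg)
    have humem : u ∈ G.neighborFinset v \ D := by rw [hveq]; exact mem_singleton_self u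
    have hAdj : G.Adj v u := (SimpleGraph.mem_neighborFinset _ _ _).mp (mem_sdiff.mp humem).1
    have hvN : v ∈ G.neighborFinset u := (SimpleGraph.mem_neighborFinset _ _ _).mpr hAdj.symm
    rw [hNs, mem_singleton] at hvN
    rw [hNs, hvN]
  have hcert : IsCertDomSet G (D ∪ B) := by
    constructor
    · intro x hx
      have hxD : x ∉ D := fun h => hx (mem_union_left _ h)
      obtain ⟨d, hd, hadj⟩ := hD x hxD
      exact ⟨d, mem_union_left _ hd, hadj⟩
    · intro x hx
      by_cases hxD : x ∈ D
      · by_cases hE2 : 2 ≤ (G.neighborFinset x \ D).card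
        · right
          have hEq : G.neighborFinset x \ (D ∪ B) = G.neighborFinset x \ D := by
            apply Subset.antisymm
            · intro y hy
              rw [mem_sdiff] at hy ⊢
              exact ⟨hy.1, fun h => hy.2 (mem_union_left _ h)⟩
            · intro y hy
              rw [mem_sdiff] at hy ⊢
              refine ⟨hy.1, fun h => ?_⟩
              rcases mem_union.mp h with h1 | h1
              · exact hy.2 h1
              · obtain ⟨hydeg, v, hvD, hveq⟩ := hBspec y h1
                have hNy := hBnbr y h1 v hvD hveq
                have : x ∈ G.neighborFinset y := (SimpleGraph.mem_neighborFinset _ _ _).mpr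
                  ((SimpleGraph.mem_neighborFinset _ _ _).mp hy.1).symm
                rw [hNy, mem_singleton] at this
                subst this
                rw [hveq, card_singleton] at hE2
                omega
          rw [hEq]
          exact hE2
        · by_cases hE1 : (G.neighborFinset x \ D).card = 1
          · left
            obtain ⟨y, hy⟩ := card_eq_one.mp hE1
            have hydeg : G.degree y = 1 := by
              by_contra hyd
              have hxbad : x ∈ badSet G D := by
                rw [badSet, mem_filter]
                refine ⟨hxD, hE1, ⟨y, ?_⟩⟩
                rw [mem_filter, hy]
                exact ⟨mem_singleton_self y, hyd⟩
              rw [hbad] at hxbad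
              exact absurd hxbad (notMem_empty x)
            have hyB : y ∈ B := by
              rw [hBdef, mem_filter]
              exact ⟨mem_univ y, hydeg, x, hxD, hy⟩
            rw [card_eq_zero, eq_empty_iff_forall_notMem]
            intro z hz
            rw [mem_sdiff] at hz
            have : z ∈ G.neighborFinset x \ D := by
              rw [mem_sdiff]
              exact ⟨hz.1, fun h => hz.2 (mem_union_left _ h)⟩
            rw [hy, mem_singleton] at this
            subst this
            exact hz.2 (mem_union_right _ hyB)
          · left
            rw [card_eq_zero, eq_empty_iff_forall_notMem]
            intro z hz
            rw [mem_sdiff] at hz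
            have hzE : z ∈ G.neighborFinset x \ D := by
              rw [mem_sdiff]
              exact ⟨hz.1, fun h => hz.2 (mem_union_left _ h)⟩
            have : (G.neighborFinset x \ D).card = 0 := by omega
            rw [card_eq_zero] at this
            rw [this] at hzE
            exact notMem_empty z hzE
      · have hxB : x ∈ B := (mem_union.mp hx).resolve_left hxD
        obtain ⟨hxdeg, v, hvD, hveq⟩ := hBspec x hxB
        have hNx := hBnbr x hxB v hvD hveq
        left
        rw [card_eq_zero, eq_empty_iff_forall_notMem]
        intro z hz
        rw [mem_sdiff, hNx, mem_singleton] at hz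
        obtain ⟨rfl, h2⟩ := hz
        exact h2 (mem_union_left _ hvD)
  -- |B| ≤ number of weak supports
  have hf : B.card ≤ (univ.filter (fun s => IsWeakSupport G s)).card := by
    set f : V → V := fun u => if h : (G.neighborFinset u).Nonempty then h.choose else u with hfdef
    have key : ∀ u ∈ B, leafNbrs G (f u) = {u} := by
      intro u hu
      obtain ⟨hudeg, v, hvD, hveq⟩ := hBspec u hu
      have hNu := hBnbr u hu v hvD hveq
      have hne : (G.neighborFinset u).Nonempty := by rw [hNu]; exact ⟨v, mem_singleton_self v⟩
      have hfu : f u = v := by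
        have h1 : f u ∈ G.neighborFinset u := by
          rw [hfdef]
          simp only [dif_pos hne]
          exact hne.choose_spec
        rwa [hNu, mem_singleton] at h1
      rw [hfu]
      apply Subset.antisymm
      · intro l hl
        rw [leafNbrs, mem_filter] at hl
        have hlD : l ∉ D := fun h => hnl l h hl.2
        have : l ∈ G.neighborFinset v \ D := mem_sdiff.mpr ⟨hl.1, hlD⟩
        rwa [hveq] at this
      · intro l hl
        rw [mem_singleton] at hl
        subst hl
        rw [leafNbrs, mem_filter]
        have : l ∈ G.neighborFinset v \ D := by rw [hveq]; exact mem_singleton_self l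
        exact ⟨(mem_sdiff.mp this).1, hudeg⟩
    apply card_le_card_of_injOn f
    · intro u hu
      rw [mem_coe, mem_filter]
      refine ⟨mem_univ _, ?_⟩
      rw [IsWeakSupport, key u hu, card_singleton]
    · intro u1 h1 u2 h2 hf12
      have k1 := key u1 h1
      have k2 := key u2 h2
      rw [hf12, k2] at k1
      exact (singleton_injective k1).symm
  calc gammaCer G ≤ (D ∪ B).card := gammaCer_le_card G hcert
    _ ≤ D.card + B.card := card_union_le _ _
    _ ≤ gamma G + (univ.filter (fun s => IsWeakSupport G s)).card := by
        rw [hc]; omega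

end AuxCertDom

set_option linter.unusedSectionVars false in
theorem gammaCer_le_gamma_add_weakSupports (G : SimpleGraph V) [DecidableRel G.Adj]
    (hconn : G.Connected) :
    gammaCer G ≤ gamma G + (univ.filter (fun s => IsWeakSupport G s)).card := by
  have hne : Nonempty V := hconn.nonempty
  rcases le_or_gt 3 (Fintype.card V) with h3 | h3
  · exact main_ge3 G h3 hconn
  · have hpos : 0 < Fintype.card V := Fintype.card_pos
    have hle : gammaCer G ≤ Fintype.card V := by
      have := gammaCer_le_card G (univ_cert G)
      rwa [card_univ] at this
    have hg1 : 1 ≤ gamma G := one_le_gamma G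
    by_cases h2 : Fintype.card V ≤ 1
    · exact le_trans (hle.trans (by omega : Fintype.card V ≤ gamma G)) (Nat.le_add_right _ _)
    · have hcard2 : Fintype.card V = 2 := by omega
      obtain ⟨a, b, hab⟩ := Fintype.exists_pair_of_one_lt_card (α := V) (by omega)
      have huniv : ({a, b} : Finset V) = univ := by
        apply eq_univ_of_card
        rw [card_insert_of_notMem (by simpa using hab), card_singleton, hcard2]
      have hmem : ∀ x : V, x = a ∨ x = b := by
        intro x
        have : x ∈ ({a, b} : Finset V) := huniv ▸ mem_univ x
        simpa using this
      have hAdj : G.Adj a b := by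
        obtain ⟨w⟩ := hconn.preconnected a b
        cases w with
        | nil => exact absurd rfl hab
        | @cons _ c _ h p =>
          rcases hmem c with rfl | rfl
          · exact absurd rfl (G.ne_of_adj h)
          · exact h
      have hNb : G.neighborFinset b = {a} := by
        apply Subset.antisymm
        · intro x hx
          rw [SimpleGraph.mem_neighborFinset] at hx
          rw [mem_singleton]
          rcases hmem x with rfl | rfl
          · rfl
          · exact absurd rfl (G.ne_of_adj hx)
        · intro x hx
          rw [mem_singleton] at hx
          subst hx
          exact (SimpleGraph.mem_neighborFinset _ _ _).mpr hAdj.symm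
      have hNa : G.neighborFinset a = {b} := by
        apply Subset.antisymm
        · intro x hx
          rw [SimpleGraph.mem_neighborFinset] at hx
          rw [mem_singleton]
          rcases hmem x with rfl | rfl
          · exact absurd rfl (G.ne_of_adj hx)
          · rfl
        · intro x hx
          rw [mem_singleton] at hx
          subst hx
          exact (SimpleGraph.mem_neighborFinset _ _ _).mpr hAdj
      have hdegb : G.degree b = 1 := by
        rw [← SimpleGraph.card_neighborFinset_eq_degree, hNb, card_singleton]
      have haweak : IsWeakSupport G a := by
        rw [IsWeakSupport]
        have : leafNbrs G a = {b} := by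
          rw [leafNbrs, hNa]
          rw [filter_singleton, if_pos hdegb]
        rw [this, card_singleton]
      have hS1 : 1 ≤ (univ.filter (fun s => IsWeakSupport G s)).card :=
        card_pos.mpr ⟨a, mem_filter.mpr ⟨mem_univ a, haweak⟩⟩
      calc gammaCer G ≤ 2 := hcard2 ▸ hle
        _ ≤ gamma G + (univ.filter (fun s => IsWeakSupport G s)).card :=
            Nat.add_le_add hg1 hS1
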